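/- There exists a finite set S ⊂ ℂ containing 0 such that for every λ ∉ S there are exactly 36 quadruples (a,b,c,p) ∈ ℂ⁴ satisfying λp² = −2a, λ²b = 4ac, 12ca³ = (2c³+1)λ, and 64c⁶ − (16λ⁶ − 32)c³ + λ⁶ = 0, and the corresponding 36 planes W(a,b,c,p) are pairwise distinct 2-dimensional subspaces of ℂ⁶, each of which is a line on X_λ. -/

import Mathlib

noncomputable section

/-- The first cubic form defining the (3,3) pencil `X_λ`. -/
def Fcubic (l : ℂ) (x : Fin 6 → ℂ) : ℂ :=
  x 0 ^ 3 + x 1 ^ 3 + x 2 ^ 3 - 3 * l * x 3 * x 4 * x 5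

/-- The second cubic form defining the (3,3) pencil `X_λ`. -/
def Gcubic (l : ℂ) (x : Fin 6 → ℂ) : ℂ :=
  x 3 ^ 3 + x 4 ^ 3 + x 5 ^ 3 - 3 * l * x 0 * x 1 * x 2

/-- The plane `W(a,b,c,p) ⊆ ℂ⁶`, spanned by `(1,−1,0,p,−p,0)` and `(a,a,b,c,c,1)`. -/
def linePlane (a b c p : ℂ) : Submodule ℂ (Fin 6 → ℂ) :=
  Submodule.span ℂ {![1, -1, 0, p, -p, 0], ![a, a, b, c, c, 1]}

/-- The system of equations characterizing the 36 lines of Lemma 2.3. -/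
def lineEqs (l a b c p : ℂ) : Prop :=
  l * p ^ 2 = -2 * a ∧ l ^ 2 * b = 4 * a * c ∧
    12 * c * a ^ 3 = (2 * c ^ 3 + 1) * l ∧
    64 * c ^ 6 - (16 * l ^ 6 - 32) * c ^ 3 + l ^ 6 = 0

open Polynomial

lemma nthRootsToFinset_mem {n : ℕ} (hn : 0 < n) (k x : ℂ) :
    x ∈ (nthRoots n k).toFinset ↔ x ^ n = k := by
  rw [Multiset.mem_toFinset, mem_nthRoots hn]

lemma nthRootsToFinset_card {n : ℕ} (hn : 0 < n) {k : ℂ} (hk : k ≠ 0) :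
    (nthRoots n k).toFinset.card = n := by
  have hsep : (X ^ n - C k).Separable :=
    separable_X_pow_sub_C k (Nat.cast_ne_zero.mpr hn.ne') hk
  have hnodup : (nthRoots n k).Nodup := nodup_roots hsep
  rw [Multiset.toFinset_card_of_nodup hnodup]
  have h2 := (splits_iff_card_roots).mp
    (IsAlgClosed.splits (k := ℂ) (X ^ n - C k))
  rwa [natDegree_X_pow_sub_C] at h2

lemma mem_linePlane_iff {a b c p : ℂ} {x : Fin 6 → ℂ} :
    x ∈ linePlane a b c p ↔
      ∃ s t : ℂ, s • ![1, -1, 0, p, -p, 0] + t • ![a, a, b, c, c, 1] = x := by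
  rw [linePlane, Submodule.mem_span_pair]

lemma linePlane_inj {a b c p a' b' c' p' : ℂ}
    (h : linePlane a b c p = linePlane a' b' c' p') :
    a = a' ∧ b = b' ∧ c = c' ∧ p = p' := by
  have hu : (![1, -1, 0, p', -p', 0] : Fin 6 → ℂ) ∈ linePlane a b c p := by
    rw [h, linePlane]; exact Submodule.subset_span (by simp)
  have hv : (![a', a', b', c', c', 1] : Fin 6 → ℂ) ∈ linePlane a b c p := by
    rw [h, linePlane]; exact Submodule.subset_span (by simp)
  rw [mem_linePlane_iff] at hu hv
  obtain ⟨s, t, hst⟩ := hu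
  obtain ⟨s', t', hst'⟩ := hv
  have h5 : s * 0 + t * 1 = (0 : ℂ) := congrFun hst 5
  have h0 : s * 1 + t * a = (1 : ℂ) := congrFun hst 0
  have h3 : s * p + t * c = p' := congrFun hst 3
  have k5 : s' * 0 + t' * 1 = (1 : ℂ) := congrFun hst' 5
  have k0 : s' * 1 + t' * a = a' := congrFun hst' 0
  have k1 : s' * (-1) + t' * a = a' := congrFun hst' 1
  have k2 : s' * 0 + t' * b = b' := congrFun hst' 2
  have k3 : s' * p + t' * c = c' := congrFun hst' 3
  have ht : t = 0 := by linear_combination h5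
  have hs : s = 1 := by linear_combination h0 - a * ht
  have ht' : t' = 1 := by linear_combination k5
  have hs' : s' = 0 := by linear_combination (k0 - k1) / 2
  refine ⟨by linear_combination k0 - hs' - a * ht', by linear_combination k2 - b * ht',
    by linear_combination k3 - p * hs' - c * ht', by linear_combination h3 - p * hs - c * ht⟩

lemma linePlane_finrank (a b c p : ℂ) : Module.finrank ℂ (linePlane a b c p) = 2 := by
  have hli : LinearIndependent ℂ ![![1, -1, 0, p, -p, 0], ![a, a, b, c, c, 1]] := by
    rw [LinearIndependent.pair_iff]
    intro s t hst
    have h5 : s * 0 + t * 1 = (0 : ℂ) := congrFun hst 5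
    have h0 : s * 1 + t * a = (0 : ℂ) := congrFun hst 0
    have ht : t = 0 := by linear_combination h5
    exact ⟨by linear_combination h0 - a * ht, ht⟩
  have hfr := finrank_span_eq_card hli
  rw [Matrix.range_cons_cons_empty] at hfr
  rw [linePlane]
  simpa using hfr

lemma linePlane_vanish {l a b c p : ℂ} (hl : l ≠ 0) (h : lineEqs l a b c p) :
    ∀ x ∈ linePlane a b c p, Fcubic l x = 0 ∧ Gcubic l x = 0 := by
  obtain ⟨e1, e2, e3, e4⟩ := h
  have hc : c ≠ 0 := by
    intro hc0
    rw [hc0] at e4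
    simp at e4
    exact hl e4
  -- key algebraic identities
  have h1 : 2 * a ^ 3 + b ^ 3 - 3 * l * c ^ 2 = 0 := by
    have key : (6 * c * l ^ 6) * (2 * a ^ 3 + b ^ 3 - 3 * l * c ^ 2) = 0 := by
      linear_combination (6 * c * (l ^ 4 * b ^ 2 + 4 * a * c * l ^ 2 * b + 16 * a ^ 2 * c ^ 2)) * e2
        + (l ^ 6 + 32 * c ^ 3) * e3 + l * e4
    have hne : (6 * c * l ^ 6 : ℂ) ≠ 0 :=
      mul_ne_zero (mul_ne_zero (by norm_num) hc) (pow_ne_zero 6 hl)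
    exact (mul_eq_zero.mp key).resolve_left hne
  have h3 : 2 * c ^ 3 + 1 - 3 * l * a ^ 2 * b = 0 := by
    have key : l * (2 * c ^ 3 + 1 - 3 * l * a ^ 2 * b) = 0 := by
      linear_combination -e3 - 3 * a ^ 2 * e2
    exact (mul_eq_zero.mp key).resolve_left hl
  have h4 : 6 * c * p ^ 2 + 3 * l * b = 0 := by
    have key : l * (6 * c * p ^ 2 + 3 * l * b) = 0 := by
      linear_combination 6 * c * e1 + 3 * e2
    exact (mul_eq_zero.mp key).resolve_left hl
  intro x hx
  rw [mem_linePlane_iff] at hx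
  obtain ⟨s, t, hst⟩ := hx
  have x0 : x 0 = s * 1 + t * a := (congrFun hst 0).symm
  have x1 : x 1 = s * (-1) + t * a := (congrFun hst 1).symm
  have x2 : x 2 = s * 0 + t * b := (congrFun hst 2).symm
  have x3 : x 3 = s * p + t * c := (congrFun hst 3).symm
  have x4 : x 4 = s * (-p) + t * c := (congrFun hst 4).symm
  have x5 : x 5 = s * 0 + t * 1 := (congrFun hst 5).symm
  constructor
  · rw [Fcubic, x0, x1, x2, x3, x4, x5]
    linear_combination t ^ 3 * h1 + 3 * t * s ^ 2 * e1
  · rw [Gcubic, x0, x1, x2, x3, x4, x5]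
    linear_combination t ^ 3 * h3 + t * s ^ 2 * h4

theorem stmt_1 :
    ∃ S : Finset ℂ, (0 : ℂ) ∈ S ∧ ∀ l : ℂ, l ∉ S →
      ({q : ℂ × ℂ × ℂ × ℂ | lineEqs l q.1 q.2.1 q.2.2.1 q.2.2.2}.ncard = 36 ∧
        Set.InjOn (fun q : ℂ × ℂ × ℂ × ℂ => linePlane q.1 q.2.1 q.2.2.1 q.2.2.2)
          {q : ℂ × ℂ × ℂ × ℂ | lineEqs l q.1 q.2.1 q.2.2.1 q.2.2.2} ∧
        ∀ q : ℂ × ℂ × ℂ × ℂ, lineEqs l q.1 q.2.1 q.2.2.1 q.2.2.2 →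
          Module.finrank ℂ (linePlane q.1 q.2.1 q.2.2.1 q.2.2.2) = 2 ∧
          ∀ x ∈ linePlane q.1 q.2.1 q.2.2.1 q.2.2.2, Fcubic l x = 0 ∧ Gcubic l x = 0) := by
  classical
  refine ⟨insert 0 ((nthRoots 6 1).toFinset ∪ (nthRoots 6 4).toFinset),
    Finset.mem_insert_self _ _, fun l hl => ?_⟩
  simp only [Finset.mem_insert, Finset.mem_union, nthRootsToFinset_mem (by norm_num : 0 < 6),
    not_or] at hl
  obtain ⟨hl0, hl1, hl4⟩ := hl
  have hl6 : l ^ 6 ≠ 0 := pow_ne_zero 6 hl0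
  -- square root of the discriminant
  obtain ⟨d, hd⟩ := IsAlgClosed.exists_pow_nat_eq ((l ^ 6 - 1) * (l ^ 6 - 4)) (n := 2) (by norm_num)
  have hd0 : d ≠ 0 := by
    intro h
    rw [h] at hd
    have hz : (l ^ 6 - 1) * (l ^ 6 - 4) = 0 := by linear_combination -hd
    rcases mul_eq_zero.mp hz with h' | h'
    · exact hl1 (by linear_combination h')
    · exact hl4 (by linear_combination h')
  set r₁ : ℂ := (l ^ 6 - 2 + d) / 8 with hr₁
  set r₂ : ℂ := (l ^ 6 - 2 - d) / 8 with hr₂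
  have hfact : ∀ z : ℂ, 64 * z ^ 2 - (16 * l ^ 6 - 32) * z + l ^ 6 = 64 * (z - r₁) * (z - r₂) := by
    intro z
    rw [hr₁, hr₂]
    linear_combination hd
  have hrprod : r₁ * r₂ = l ^ 6 / 64 := by
    rw [hr₁, hr₂]
    linear_combination -hd / 64
  have hr₁0 : r₁ ≠ 0 := fun h =>
    hl6 (by rw [h, zero_mul] at hrprod; linear_combination -64 * hrprod)
  have hr₂0 : r₂ ≠ 0 := fun h =>
    hl6 (by rw [h, mul_zero] at hrprod; linear_combination -64 * hrprod)
  have hrne : r₁ ≠ r₂ := fun h =>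
    hd0 (by rw [hr₁, hr₂] at h; linear_combination 4 * h)
  have hhalf : ∀ z : ℂ, (z = r₁ ∨ z = r₂) → 2 * z + 1 ≠ 0 := by
    intro z hz h
    have h9 : 64 * z ^ 2 - (16 * l ^ 6 - 32) * z + l ^ 6 = 9 * l ^ 6 := by
      linear_combination (32 * z - 8 * l ^ 6) * h
    have h0 : (0 : ℂ) = 9 * l ^ 6 := by
      rcases hz with hz | hz <;> rw [← h9, hfact z, hz] <;> ring
    exact hl6 (by linear_combination -h0 / 9)
  -- finite sets of roots
  set Af : ℂ → Finset ℂ :=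
    fun c => (nthRoots 3 ((2 * c ^ 3 + 1) * l / (12 * c))).toFinset with hAf
  set Pf : ℂ → Finset ℂ := fun a => (nthRoots 2 (-2 * a / l)).toFinset with hPf
  set Cc : Finset ℂ := (nthRoots 3 r₁).toFinset ∪ (nthRoots 3 r₂).toFinset with hCc
  have hmemC : ∀ c : ℂ, c ∈ Cc ↔ (c ^ 3 = r₁ ∨ c ^ 3 = r₂) := by
    intro c
    rw [hCc, Finset.mem_union, nthRootsToFinset_mem (by norm_num),
      nthRootsToFinset_mem (by norm_num)]
  have hmemA : ∀ c a : ℂ, a ∈ Af c ↔ a ^ 3 = (2 * c ^ 3 + 1) * l / (12 * c) := by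
    intro c a
    rw [hAf]
    exact nthRootsToFinset_mem (by norm_num) _ a
  have hmemP : ∀ a q : ℂ, q ∈ Pf a ↔ q ^ 2 = -2 * a / l := by
    intro a q
    rw [hPf]
    exact nthRootsToFinset_mem (by norm_num) _ q
  have hC0 : ∀ c ∈ Cc, c ≠ 0 := by
    intro c hc h0
    rw [hmemC] at hc
    rcases hc with hc | hc <;> rw [h0] at hc <;> simp at hc
    · exact hr₁0 hc.symm
    · exact hr₂0 hc.symm
  have hC1 : ∀ c ∈ Cc, 2 * c ^ 3 + 1 ≠ 0 := fun c hc => hhalf _ ((hmemC c).mp hc)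
  have hAk : ∀ c ∈ Cc, (2 * c ^ 3 + 1) * l / (12 * c) ≠ 0 := fun c hc =>
    div_ne_zero (mul_ne_zero (hC1 c hc) hl0)
      (mul_ne_zero (by norm_num) (hC0 c hc))
  have hA0 : ∀ c ∈ Cc, ∀ a ∈ Af c, a ≠ 0 := by
    intro c hc a ha h0
    apply hAk c hc
    rw [← (hmemA c a).mp ha, h0]
    ring
  set T : Finset (ℂ × ℂ × ℂ × ℂ) :=
    Cc.biUnion (fun c => (Af c).biUnion
      (fun a => (Pf a).image (fun p => (a, 4 * a * c / l ^ 2, c, p)))) with hT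
  have hmemT : ∀ q : ℂ × ℂ × ℂ × ℂ, q ∈ T ↔
      ∃ c ∈ Cc, ∃ a ∈ Af c, ∃ p ∈ Pf a, (a, 4 * a * c / l ^ 2, c, p) = q := by
    intro q
    simp only [hT, Finset.mem_biUnion, Finset.mem_image]
  -- the solution set is exactly T
  have hset : {q : ℂ × ℂ × ℂ × ℂ | lineEqs l q.1 q.2.1 q.2.2.1 q.2.2.2} = ↑T := by
    ext ⟨a, b, c, p⟩
    simp only [Set.mem_setOf_eq, Finset.mem_coe, hmemT]
    constructor
    · rintro ⟨e1, e2, e3, e4⟩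
      have hc0 : c ≠ 0 := by
        intro h0
        rw [h0] at e4
        simp at e4
        exact hl0 e4
      have hcr : c ^ 3 = r₁ ∨ c ^ 3 = r₂ := by
        have hq : 64 * (c ^ 3 - r₁) * (c ^ 3 - r₂) = 0 := by
          rw [← hfact]
          linear_combination e4
        rcases mul_eq_zero.mp hq with h | h
        · left
          have h2 := (mul_eq_zero.mp h).resolve_left (by norm_num)
          linear_combination h2
        · right
          linear_combination h
      have hcC : c ∈ Cc := (hmemC c).mpr hcr
      have ha3 : a ^ 3 = (2 * c ^ 3 + 1) * l / (12 * c) := by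
        rw [eq_div_iff (mul_ne_zero (by norm_num) hc0)]
        linear_combination e3
      have hp2 : p ^ 2 = -2 * a / l := by
        rw [eq_div_iff hl0]
        linear_combination e1
      have hb : b = 4 * a * c / l ^ 2 := by
        rw [eq_div_iff (pow_ne_zero 2 hl0)]
        linear_combination e2
      exact ⟨c, hcC, a, (hmemA c a).mpr ha3, p, (hmemP a p).mpr hp2, by rw [hb]⟩
    · rintro ⟨c', hcC, a', haA, p', hpP, heq⟩
      simp only [Prod.mk.injEq] at heq
      obtain ⟨h1, h2, h3, h4⟩ := heq
      subst h1
      subst h3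
      subst h4
      have hc0 : c' ≠ 0 := hC0 c' hcC
      have ha3 := (hmemA c' a').mp haA
      have hp2 := (hmemP a' p').mp hpP
      have hcr := (hmemC c').mp hcC
      refine ⟨?_, ?_, ?_, ?_⟩
      · rw [hp2]
        field_simp
      · rw [← h2]
        field_simp
      · rw [ha3]
        field_simp
      · have hq : 64 * (c' ^ 3) ^ 2 - (16 * l ^ 6 - 32) * c' ^ 3 + l ^ 6 = 0 := by
          rw [hfact (c' ^ 3)]
          rcases hcr with h | h <;> rw [h] <;> ring
        linear_combination hq
  -- cardinalities
  have hCcard : Cc.card = 6 := by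
    rw [hCc, Finset.card_union_of_disjoint, nthRootsToFinset_card (by norm_num) hr₁0,
      nthRootsToFinset_card (by norm_num) hr₂0]
    rw [Finset.disjoint_left]
    intro x hx hx'
    rw [nthRootsToFinset_mem (by norm_num)] at hx hx'
    exact hrne (hx ▸ hx')
  have hPcard : ∀ c ∈ Cc, ∀ a ∈ Af c, (Pf a).card = 2 := by
    intro c hc a ha
    exact nthRootsToFinset_card (by norm_num)
      (div_ne_zero (by simpa using hA0 c hc a ha) hl0)
  have hAcard : ∀ c ∈ Cc, (Af c).card = 3 := by
    intro c hc
    exact nthRootsToFinset_card (by norm_num) (hAk c hc)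
  have hinner : ∀ c ∈ Cc,
      ((Af c).biUnion (fun a => (Pf a).image (fun p => (a, 4 * a * c / l ^ 2, c, p)))).card
        = 6 := by
    intro c hc
    rw [Finset.card_biUnion]
    · have : ∀ a ∈ Af c,
          ((Pf a).image (fun p => (a, 4 * a * c / l ^ 2, c, p))).card = 2 := by
        intro a ha
        rw [Finset.card_image_of_injective _ (fun p₁ p₂ h => by
          simpa using congrArg (fun q : ℂ × ℂ × ℂ × ℂ => q.2.2.2) h)]
        exact hPcard c hc a ha
      rw [Finset.sum_congr rfl this, Finset.sum_const, hAcard c hc]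
      rfl
    · intro a ha a' ha' hne
      rw [Function.onFun, Finset.disjoint_left]
      intro q hq hq'
      rw [Finset.mem_image] at hq hq'
      obtain ⟨p₁, _, rfl⟩ := hq
      obtain ⟨p₂, _, h2⟩ := hq'
      exact hne (by simpa using congrArg (fun q : ℂ × ℂ × ℂ × ℂ => q.1) h2.symm)
  have hTcard : T.card = 36 := by
    rw [hT, Finset.card_biUnion]
    · rw [Finset.sum_congr rfl hinner, Finset.sum_const, hCcard]
      rfl
    · intro c hc c' hc' hne
      rw [Function.onFun, Finset.disjoint_left]
      intro q hq hq'
      rw [Finset.mem_biUnion] at hq hq'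
      obtain ⟨a₁, _, hq⟩ := hq
      obtain ⟨a₂, _, hq'⟩ := hq'
      rw [Finset.mem_image] at hq hq'
      obtain ⟨p₁, _, rfl⟩ := hq
      obtain ⟨p₂, _, h2⟩ := hq'
      exact hne (by simpa using congrArg (fun q : ℂ × ℂ × ℂ × ℂ => q.2.2.1) h2.symm)
  refine ⟨?_, ?_, ?_⟩
  · rw [hset, Set.ncard_coe_finset, hTcard]
  · intro q _ q' _ h
    obtain ⟨h1, h2, h3, h4⟩ := linePlane_inj h
    exact Prod.ext h1 (Prod.ext h2 (Prod.ext h3 h4))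
  · intro q hq
    exact ⟨linePlane_finrank _ _ _ _, linePlane_vanish hl0 hq⟩
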